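/- arXiv:2206.10936 — 2 statements merged into one kernel-verified Lean document; each statement's English description precedes it below -/
import Mathlib

section
/- Let n ≥ 1, let g be a metric field on ℝⁿ, and let Γ, Γ* be Christoffel fields that are dual with respect to g, with associated covariant derivatives ∇ and ∇*. Then for all differentiable vector fields X, Y : ℝⁿ → ℝⁿ, every p ∈ ℝⁿ and every direction vector Z(p) ∈ ℝⁿ of a vector field Z, the directional derivative at p in direction Z(p) of the function q ↦ X(q)ᵀ g(q) Y(q) equals ((∇_Z X)(p))ᵀ g(p) Y(p) + X(p)ᵀ g(p) (∇*_Z Y)(p). -/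
private lemma sum_comm3 {n : ℕ} (A : Fin n → Fin n → Fin n → ℝ) :
    ∑ i, ∑ k, ∑ m, A i k m = ∑ m, ∑ k, ∑ i, A i k m :=
  calc ∑ i, ∑ k, ∑ m, A i k m
      = ∑ i, ∑ m, ∑ k, A i k m := Finset.sum_congr rfl fun _ _ => Finset.sum_comm
    _ = ∑ m, ∑ i, ∑ k, A i k m := Finset.sum_comm
    _ = ∑ m, ∑ k, ∑ i, A i k m := Finset.sum_congr rfl fun _ _ => Finset.sum_comm

private lemma sum_swap4 {n : ℕ} (A : Fin n → Fin n → Fin n → Fin n → ℝ) :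
    ∑ i, ∑ j, ∑ k, ∑ m, A i j k m = ∑ m, ∑ j, ∑ k, ∑ i, A i j k m := by
  rw [Finset.sum_comm, show (∑ m, ∑ j, ∑ k, ∑ i, A i j k m)
      = ∑ j, ∑ m, ∑ k, ∑ i, A i j k m from Finset.sum_comm]
  exact Finset.sum_congr rfl fun j _ => sum_comm3 _

/-- If `Γ` and `Γs` are dual Christoffel fields with respect to the metric
field `g`, with covariant derivatives `∇` and `∇*`, then for differentiable vector fields
`X, Y` and any vector field `Z`,
`Z(g(X,Y))(p) = g(∇_Z X, Y)(p) + g(X, ∇*_Z Y)(p)`, where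
`(∇_Z X)(p)^k = (fderiv X p (Z p))^k + ∑_{j,i} Γ^k_{ji}(p) Z(p)^j X(p)^i`. -/
theorem dual_connections_metric_product_rule (n : ℕ) (hn : 1 ≤ n)
    (g : (Fin n → ℝ) → Matrix (Fin n) (Fin n) ℝ)
    (hsymm : ∀ p, (g p).IsSymm)
    (hpos : ∀ p, (g p).PosDef)
    (hdiffg : ∀ i j : Fin n, Differentiable ℝ fun p => g p i j)
    (Γ Γs : (Fin n → ℝ) → Fin n → Fin n → Fin n → ℝ)
    (hdual : ∀ (p : Fin n → ℝ) (i j k : Fin n),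
      fderiv ℝ (fun q => g q i j) p (Pi.single k 1)
        = (∑ m, g p j m * Γ p m k i) + (∑ m, g p i m * Γs p m k j))
    (X Y Z : (Fin n → ℝ) → Fin n → ℝ)
    (hX : Differentiable ℝ X) (hY : Differentiable ℝ Y)
    (p : Fin n → ℝ) :
    fderiv ℝ (fun q => ∑ i, ∑ j, X q i * g q i j * Y q j) p (Z p)
      = (∑ i, ∑ j,
          (fderiv ℝ X p (Z p) i + ∑ a, ∑ b, Γ p i a b * Z p a * X p b)
            * g p i j * Y p j)
      + (∑ i, ∑ j,
          X p i * g p i j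
            * (fderiv ℝ Y p (Z p) j + ∑ a, ∑ b, Γs p j a b * Z p a * Y p b)) := by
  classical
  set v := Z p with hv
  have hXc : ∀ i, HasFDerivAt (fun q => X q i)
      ((ContinuousLinearMap.proj i).comp (fderiv ℝ X p)) p :=
    hasFDerivAt_pi'.1 (hX p).hasFDerivAt
  have hYc : ∀ j, HasFDerivAt (fun q => Y q j)
      ((ContinuousLinearMap.proj j).comp (fderiv ℝ Y p)) p :=
    hasFDerivAt_pi'.1 (hY p).hasFDerivAt
  have hgc : ∀ i j, HasFDerivAt (fun q => g q i j) (fderiv ℝ (fun q => g q i j) p) p :=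
    fun i j => ((hdiffg i j) p).hasFDerivAt
  have hsumd : HasFDerivAt (fun q => ∑ i, ∑ j, X q i * g q i j * Y q j)
      (∑ i, ∑ j,
        ((X p i * g p i j) • ((ContinuousLinearMap.proj j).comp (fderiv ℝ Y p))
          + Y p j • ((X p i) • (fderiv ℝ (fun q => g q i j) p)
              + (g p i j) • ((ContinuousLinearMap.proj i).comp (fderiv ℝ X p))))) p := by
    refine HasFDerivAt.fun_sum fun i _ => HasFDerivAt.fun_sum fun j _ => ?_
    exact ((hXc i).mul (hgc i j)).mul (hYc j)
  rw [hsumd.fderiv]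
  -- expand the application of the derivative
  have happ : (∑ i, ∑ j,
        ((X p i * g p i j) • ((ContinuousLinearMap.proj j).comp (fderiv ℝ Y p))
          + Y p j • ((X p i) • (fderiv ℝ (fun q => g q i j) p)
              + (g p i j) • ((ContinuousLinearMap.proj i).comp (fderiv ℝ X p))))) v
      = ∑ i, ∑ j,
        (X p i * g p i j * (fderiv ℝ Y p v j)
          + Y p j * (X p i * (fderiv ℝ (fun q => g q i j) p v)
              + g p i j * (fderiv ℝ X p v i))) := by
    simp only [ContinuousLinearMap.sum_apply, ContinuousLinearMap.add_apply,
      ContinuousLinearMap.smul_apply, ContinuousLinearMap.comp_apply,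
      ContinuousLinearMap.proj_apply, smul_eq_mul, Pi.smul_apply]
  rw [happ]
  -- compute the derivative of g in direction v
  have hGv : ∀ i j, fderiv ℝ (fun q => g q i j) p v
      = ∑ k, v k * ((∑ m, g p j m * Γ p m k i) + (∑ m, g p i m * Γs p m k j)) := by
    intro i j
    have hv' : v = ∑ k, v k • (Pi.single k (1 : ℝ) : Fin n → ℝ) := by
      funext l
      simp [Finset.sum_apply, Pi.single_apply]
    conv_lhs => rw [hv']
    rw [map_sum]
    simp only [map_smul, smul_eq_mul, hdual]
  have lhs_eq : (∑ i, ∑ j,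
        (X p i * g p i j * (fderiv ℝ Y p v j)
          + Y p j * (X p i * (fderiv ℝ (fun q => g q i j) p v)
              + g p i j * (fderiv ℝ X p v i))))
      = (∑ i, ∑ j, (fderiv ℝ X p v i) * g p i j * Y p j)
        + (∑ i, ∑ j, X p i * (fderiv ℝ (fun q => g q i j) p v) * Y p j)
        + (∑ i, ∑ j, X p i * g p i j * (fderiv ℝ Y p v j)) := by
    rw [← Finset.sum_add_distrib, ← Finset.sum_add_distrib]
    refine Finset.sum_congr rfl fun i _ => ?_
    rw [← Finset.sum_add_distrib, ← Finset.sum_add_distrib]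
    exact Finset.sum_congr rfl fun j _ => by ring
  rw [lhs_eq]
  -- key: the middle sum splits into the two Christoffel contributions
  have key : (∑ i, ∑ j, X p i * (fderiv ℝ (fun q => g q i j) p v) * Y p j)
      = (∑ i, ∑ j, (∑ a, ∑ b, Γ p i a b * v a * X p b) * g p i j * Y p j)
        + (∑ i, ∑ j, X p i * g p i j * (∑ a, ∑ b, Γs p j a b * v a * Y p b)) := by
    simp only [hGv]
    have expand : (∑ i, ∑ j, X p i * (∑ k, v k *
          ((∑ m, g p j m * Γ p m k i) + (∑ m, g p i m * Γs p m k j))) * Y p j)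
        = (∑ i, ∑ j, ∑ k, ∑ m, X p i * (v k * (g p j m * Γ p m k i)) * Y p j)
          + (∑ i, ∑ j, ∑ k, ∑ m, X p i * (v k * (g p i m * Γs p m k j)) * Y p j) := by
      rw [← Finset.sum_add_distrib]
      refine Finset.sum_congr rfl fun i _ => ?_
      rw [← Finset.sum_add_distrib]
      refine Finset.sum_congr rfl fun j _ => ?_
      rw [← Finset.sum_add_distrib, Finset.mul_sum, Finset.sum_mul]
      refine Finset.sum_congr rfl fun k _ => ?_
      rw [← Finset.sum_add_distrib]
      simp only [Finset.mul_sum, Finset.sum_mul, mul_add, add_mul]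
      exact Finset.sum_add_distrib
    rw [expand]
    congr 1
    · -- Γ part: reorder (i,j,k,m) ↦ (m,j,k,i) and use symmetry of g
      rw [sum_swap4]
      refine Finset.sum_congr rfl fun i _ => Finset.sum_congr rfl fun j _ => ?_
      rw [Finset.sum_mul, Finset.sum_mul]
      refine Finset.sum_congr rfl fun a _ => ?_
      rw [Finset.sum_mul, Finset.sum_mul]
      refine Finset.sum_congr rfl fun b _ => ?_
      have hs : g p j i = g p i j := congrFun (congrFun (hsymm p) i) j
      rw [← hs]; ring
    · -- Γs part: reorder inner (j,k,m) ↦ (m,k,j)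
      refine Finset.sum_congr rfl fun i _ => ?_
      rw [sum_comm3 (fun j k m => X p i * (v k * (g p i m * Γs p m k j)) * Y p j)]
      refine Finset.sum_congr rfl fun j _ => ?_
      rw [Finset.mul_sum]
      refine Finset.sum_congr rfl fun a _ => ?_
      rw [Finset.mul_sum]
      exact Finset.sum_congr rfl fun b _ => by ring
  rw [key]
  -- final regrouping
  have ra : (∑ i, ∑ j,
        (fderiv ℝ X p v i + ∑ a, ∑ b, Γ p i a b * v a * X p b) * g p i j * Y p j)
      = (∑ i, ∑ j, (fderiv ℝ X p v i) * g p i j * Y p j)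
        + (∑ i, ∑ j, (∑ a, ∑ b, Γ p i a b * v a * X p b) * g p i j * Y p j) := by
    rw [← Finset.sum_add_distrib]
    refine Finset.sum_congr rfl fun i _ => ?_
    rw [← Finset.sum_add_distrib]
    exact Finset.sum_congr rfl fun j _ => by ring
  have rb : (∑ i, ∑ j,
        X p i * g p i j * (fderiv ℝ Y p v j + ∑ a, ∑ b, Γs p j a b * v a * Y p b))
      = (∑ i, ∑ j, X p i * g p i j * (fderiv ℝ Y p v j))
        + (∑ i, ∑ j, X p i * g p i j * (∑ a, ∑ b, Γs p j a b * v a * Y p b)) := by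
    rw [← Finset.sum_add_distrib]
    refine Finset.sum_congr rfl fun i _ => ?_
    rw [← Finset.sum_add_distrib]
    exact Finset.sum_congr rfl fun j _ => by ring
  rw [ra, rb]
  ring
end

section
/- Let n ≥ 1, let g be a metric field on ℝⁿ, let Γ, Γ* be Christoffel fields dual with respect to g, with covariant derivatives ∇ and ∇*, let S ⊆ Fin n, and let W be the corresponding coordinate subspace with g-orthogonal projections P(p) and induced covariant derivatives ∇̃, ∇̃*. Then the induced connections are dual with respect to the induced metric: for all differentiable W-valued vector fields X, Y, Z : ℝⁿ → ℝⁿ and every p ∈ ℝⁿ, the directional derivative at p in direction Z(p) of the function q ↦ X(q)ᵀ g(q) Y(q) equals ((∇̃_Z X)(p))ᵀ g(p) Y(p) + X(p)ᵀ g(p) (∇̃*_Z Y)(p). -/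
private lemma sum3_swap {n : ℕ} (f : Fin n → Fin n → Fin n → ℝ) :
    ∑ i, ∑ k, ∑ m, f i k m = ∑ m, ∑ k, ∑ i, f i k m := by
  rw [Finset.sum_comm]
  rw [show (∑ m, ∑ k, ∑ i, f i k m) = ∑ k, ∑ m, ∑ i, f i k m from Finset.sum_comm]
  exact Finset.sum_congr rfl fun k _ => Finset.sum_comm

private lemma sum4_swap {n : ℕ} (f : Fin n → Fin n → Fin n → Fin n → ℝ) :
    ∑ i, ∑ j, ∑ k, ∑ m, f i j k m = ∑ m, ∑ j, ∑ k, ∑ i, f i j k m := by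
  rw [Finset.sum_comm]
  rw [show (∑ m, ∑ j, ∑ k, ∑ i, f i j k m) = ∑ j, ∑ m, ∑ k, ∑ i, f i j k m from
    Finset.sum_comm]
  exact Finset.sum_congr rfl fun j _ => sum3_swap _

private lemma key_algebra {n : ℕ} (Xp Yp Zp X' Y' : Fin n → ℝ) (G : Fin n → Fin n → ℝ)
    (hG : ∀ i j, G i j = G j i) (A B : Fin n → Fin n → Fin n → ℝ) :
    ∑ i, ∑ j, (X' i * G i j * Yp j
        + Xp i * (∑ k, Zp k * ((∑ m, G j m * A m k i) + (∑ m, G i m * B m k j))) * Yp j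
        + Xp i * G i j * Y' j)
      = (∑ i, ∑ j, (X' i + ∑ a, ∑ b, A i a b * Zp a * Xp b) * G i j * Yp j)
        + ∑ i, ∑ j, Xp i * G i j * (Y' j + ∑ a, ∑ b, B j a b * Zp a * Yp b) := by
  have e1 : ∀ i j : Fin n,
      Xp i * (∑ k, Zp k * ((∑ m, G j m * A m k i) + (∑ m, G i m * B m k j))) * Yp j
      = (∑ k, ∑ m, Xp i * Yp j * Zp k * G j m * A m k i)
        + (∑ k, ∑ m, Xp i * Yp j * Zp k * G i m * B m k j) := by
    intro i j
    rw [Finset.mul_sum, Finset.sum_mul, ← Finset.sum_add_distrib]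
    refine Finset.sum_congr rfl fun k _ => ?_
    rw [mul_add, mul_add, add_mul, Finset.mul_sum, Finset.mul_sum, Finset.mul_sum,
      Finset.mul_sum, Finset.sum_mul, Finset.sum_mul]
    congr 1 <;> exact Finset.sum_congr rfl fun m _ => by ring
  simp only [e1]
  simp only [add_mul, mul_add, Finset.sum_add_distrib]
  have hI : (∑ i, ∑ j, ∑ k, ∑ m, Xp i * Yp j * Zp k * G j m * A m k i)
      = ∑ i, ∑ j, (∑ a, ∑ b, A i a b * Zp a * Xp b) * G i j * Yp j := by
    rw [sum4_swap (fun i j k m => Xp i * Yp j * Zp k * G j m * A m k i)]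
    refine Finset.sum_congr rfl fun m _ => Finset.sum_congr rfl fun j _ => ?_
    simp only [Finset.sum_mul]
    refine Finset.sum_congr rfl fun k _ => Finset.sum_congr rfl fun i _ => ?_
    rw [hG j m]; ring
  have hII : (∑ i, ∑ j, ∑ k, ∑ m, Xp i * Yp j * Zp k * G i m * B m k j)
      = ∑ i, ∑ j, Xp i * G i j * (∑ a, ∑ b, B j a b * Zp a * Yp b) := by
    rw [show (∑ i, ∑ j, ∑ k, ∑ m, Xp i * Yp j * Zp k * G i m * B m k j)
        = ∑ i, ∑ m, ∑ k, ∑ j, Xp i * Yp j * Zp k * G i m * B m k j from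
      Finset.sum_congr rfl fun i _ => sum3_swap _]
    refine Finset.sum_congr rfl fun i _ => Finset.sum_congr rfl fun m _ => ?_
    simp only [Finset.mul_sum]
    refine Finset.sum_congr rfl fun k _ => Finset.sum_congr rfl fun j _ => by ring
  rw [hI, hII]; ring

/-- Let `Γ, Γs` be Christoffel fields dual with respect to the metric field
`g`, let `W = {v : v i = 0 for i ∈ S}` be a coordinate subspace, and let `P p` be the
`g(p)`-orthogonal projection onto `W`. Then the induced connections
`(∇̃_Z X)(p) = P p ((∇_Z X)(p))` and `(∇̃*_Z Y)(p) = P p ((∇*_Z Y)(p))`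
are dual with respect to the induced metric: for all differentiable `W`-valued vector
fields `X, Y, Z` and every `p`,
`Z(g(X,Y))(p) = g(∇̃_Z X, Y)(p) + g(X, ∇̃*_Z Y)(p)`. -/
theorem induced_connections_dual (n : ℕ) (hn : 1 ≤ n)
    (g : (Fin n → ℝ) → Matrix (Fin n) (Fin n) ℝ)
    (hsymm : ∀ p, (g p).IsSymm)
    (hpos : ∀ p, (g p).PosDef)
    (hdiffg : ∀ i j : Fin n, Differentiable ℝ fun p => g p i j)
    (Γ Γs : (Fin n → ℝ) → Fin n → Fin n → Fin n → ℝ)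
    (hdual : ∀ (p : Fin n → ℝ) (i j k : Fin n),
      fderiv ℝ (fun q => g q i j) p (Pi.single k 1)
        = (∑ m, g p j m * Γ p m k i) + (∑ m, g p i m * Γs p m k j))
    (S : Set (Fin n))
    (P : (Fin n → ℝ) → (Fin n → ℝ) →ₗ[ℝ] (Fin n → ℝ))
    -- `P p` maps into `W`:
    (hPW : ∀ (p : Fin n → ℝ) (v : Fin n → ℝ), ∀ i ∈ S, P p v i = 0)
    -- `P p` fixes `W`:
    (hPid : ∀ (p : Fin n → ℝ) (w : Fin n → ℝ), (∀ i ∈ S, w i = 0) → P p w = w)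
    -- `v - P p v` is `g(p)`-orthogonal to `W`:
    (hPorth : ∀ (p : Fin n → ℝ) (v w : Fin n → ℝ), (∀ i ∈ S, w i = 0) →
      ∑ i, ∑ j, (v i - P p v i) * g p i j * w j = 0)
    (X Y Z : (Fin n → ℝ) → Fin n → ℝ)
    (hX : Differentiable ℝ X) (hY : Differentiable ℝ Y) (hZ : Differentiable ℝ Z)
    (hXW : ∀ q, ∀ i ∈ S, X q i = 0)
    (hYW : ∀ q, ∀ i ∈ S, Y q i = 0)
    (hZW : ∀ q, ∀ i ∈ S, Z q i = 0)
    (p : Fin n → ℝ) :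
    fderiv ℝ (fun q => ∑ i, ∑ j, X q i * g q i j * Y q j) p (Z p)
      = (∑ i, ∑ j,
          P p (fun k => fderiv ℝ X p (Z p) k + ∑ a, ∑ b, Γ p k a b * Z p a * X p b) i
            * g p i j * Y p j)
      + (∑ i, ∑ j,
          X p i * g p i j
            * P p (fun k => fderiv ℝ Y p (Z p) k + ∑ a, ∑ b, Γs p k a b * Z p a * Y p b) j) := by
  classical
  -- component differentiability and component fderiv
  have hXd : ∀ i, Differentiable ℝ fun q => X q i := fun i => differentiable_pi.mp hX i
  have hYd : ∀ i, Differentiable ℝ fun q => Y q i := fun i => differentiable_pi.mp hY i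
  have hcomp : ∀ (V : (Fin n → ℝ) → Fin n → ℝ), Differentiable ℝ V → ∀ (i : Fin n),
      fderiv ℝ (fun q => V q i) p (Z p) = fderiv ℝ V p (Z p) i := by
    intro V hV i
    have h := ((ContinuousLinearMap.proj (R := ℝ) (φ := fun _ : Fin n => ℝ) i).hasFDerivAt.comp p
      (hV p).hasFDerivAt).fderiv
    have h2 : (fun q => V q i)
        = ⇑(ContinuousLinearMap.proj (R := ℝ) (φ := fun _ : Fin n => ℝ) i) ∘ V := rfl
    rw [h2, h]; rfl
  -- duality in direction Z p
  have hgZ : ∀ i j : Fin n, fderiv ℝ (fun q => g q i j) p (Z p)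
      = ∑ k, Z p k * ((∑ m, g p j m * Γ p m k i) + (∑ m, g p i m * Γs p m k j)) := by
    intro i j
    have h : Z p = ∑ k, Z p k • (Pi.single k (1:ℝ) : Fin n → ℝ) := by
      funext a; simp [Finset.sum_apply, Pi.single_apply]
    conv_lhs => rw [h]
    rw [map_sum]
    refine Finset.sum_congr rfl fun k _ => ?_
    rw [map_smul, hdual p i j k]; rfl
  -- product rule for three factors
  have hprod : ∀ i j : Fin n,
      fderiv ℝ (fun q => X q i * g q i j * Y q j) p (Z p)
        = fderiv ℝ X p (Z p) i * g p i j * Y p j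
          + X p i * fderiv ℝ (fun q => g q i j) p (Z p) * Y p j
          + X p i * g p i j * fderiv ℝ Y p (Z p) j := by
    intro i j
    have h1 : fderiv ℝ (fun q => X q i * g q i j * Y q j) p
        = (X p i * g p i j) • fderiv ℝ (fun q => Y q j) p
          + (Y p j) • fderiv ℝ (fun q => X q i * g q i j) p :=
      fderiv_mul ((hXd i p).mul (hdiffg i j p)) (hYd j p)
    have h2 : fderiv ℝ (fun q => X q i * g q i j) p
        = (X p i) • fderiv ℝ (fun q => g q i j) p
          + (g p i j) • fderiv ℝ (fun q => X q i) p :=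
      fderiv_mul (hXd i p) (hdiffg i j p)
    rw [h1]
    simp only [ContinuousLinearMap.add_apply, ContinuousLinearMap.smul_apply, smul_eq_mul]
    rw [h2]
    simp only [ContinuousLinearMap.add_apply, ContinuousLinearMap.smul_apply, smul_eq_mul]
    rw [hcomp X hX i, hcomp Y hY j]
    ring
  -- compute the LHS
  have hL : fderiv ℝ (fun q => ∑ i, ∑ j, X q i * g q i j * Y q j) p (Z p)
      = ∑ i, ∑ j, fderiv ℝ (fun q => X q i * g q i j * Y q j) p (Z p) := by
    have hrw : (fun q => ∑ i, ∑ j, X q i * g q i j * Y q j)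
        = fun q => ∑ x : Fin n × Fin n, X q x.1 * g q x.1 x.2 * Y q x.2 := by
      funext q; rw [Fintype.sum_prod_type]
    rw [hrw, fderiv_fun_sum (fun x _ =>
      (((hXd x.1 p).mul (hdiffg x.1 x.2 p)).mul (hYd x.2 p)))]
    simp only [ContinuousLinearMap.coe_sum', Finset.sum_apply]
    exact Fintype.sum_prod_type _
  -- remove the projections on the RHS
  have hP1 : ∀ v : Fin n → ℝ, (∑ i, ∑ j, P p v i * g p i j * Y p j)
      = ∑ i, ∑ j, v i * g p i j * Y p j := by
    intro v
    have h0 := hPorth p v (Y p) (hYW p)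
    simp only [sub_mul, Finset.sum_sub_distrib] at h0
    linarith
  have hP2 : ∀ v : Fin n → ℝ, (∑ i, ∑ j, X p i * g p i j * P p v j)
      = ∑ i, ∑ j, X p i * g p i j * v j := by
    intro v
    have h0 := hPorth p v (X p) (hXW p)
    rw [Finset.sum_comm] at h0
    have h1 : ∑ i, ∑ j, X p i * g p i j * (v j - P p v j) = 0 := by
      rw [show (∑ i, ∑ j, X p i * g p i j * (v j - P p v j))
          = ∑ i, ∑ j, (v j - P p v j) * g p j i * X p i from
        Finset.sum_congr rfl fun i _ => Finset.sum_congr rfl fun j _ => by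
          rw [(hsymm p).apply i j]; ring]
      exact h0
    simp only [mul_sub, Finset.sum_sub_distrib] at h1
    linarith
  rw [hL, hP1, hP2]
  rw [show (∑ i, ∑ j, fderiv ℝ (fun q => X q i * g q i j * Y q j) p (Z p))
      = ∑ i, ∑ j, (fderiv ℝ X p (Z p) i * g p i j * Y p j
          + X p i * (∑ k, Z p k * ((∑ m, g p j m * Γ p m k i) + (∑ m, g p i m * Γs p m k j)))
              * Y p j
          + X p i * g p i j * fderiv ℝ Y p (Z p) j) from
    Finset.sum_congr rfl fun i _ => Finset.sum_congr rfl fun j _ => by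
      rw [hprod i j, hgZ i j]]
  exact key_algebra (X p) (Y p) (Z p) (fun i => fderiv ℝ X p (Z p) i)
    (fun j => fderiv ℝ Y p (Z p) j) (fun i j => g p i j)
    (fun i j => (hsymm p).apply j i) (Γ p) (Γs p)
end
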